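/- Clumped one-dimensional optimal embedding below the threshold (Proposition 4): let w ∈ ℝ^N with w_i ≥ 0 for all i, let λ := λ2(L(w)), and assume the eigenspace of L(w) for the eigenvalue λ is one-dimensional and spanned by the vector z = (e; −e) ∈ ℝ^n (i.e., λ2 is simple with Fiedler vector z). Let U be an n×n real matrix and X := UᵀU with ⟨X, e_n e_nᵀ⟩ = 0 and ⟨X, L(w) − λ·I⟩ = 0. Then there exists a vector h ∈ ℝ^n such that the i-th column u_i of U satisfies u_i = h for every 1 ≤ i ≤ N and u_i = −h for every N+1 ≤ i ≤ n; i.e., in the optimal realization the nodes of each layer clump together at two opposite points. -/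

import Mathlib

open Matrix

/-- Eigenvalues of a real symmetric matrix, listed in nondecreasing order with multiplicity
(junk value `0` if the matrix is not Hermitian). -/
noncomputable def sortedEigs {m : ℕ} (A : Matrix (Fin m) (Fin m) ℝ) : Fin m → ℝ :=
  if hA : A.IsHermitian then fun k => hA.eigenvalues (Tuple.sort hA.eigenvalues k) else 0

/-- The supra-Laplacian `L(w) = [[L1 + W, -W], [-W, L2 + W]]` of a two-layer multiplex,
as a matrix indexed by `Fin (N + N)`. -/
noncomputable def supraLap {N : ℕ} (L1 L2 : Matrix (Fin N) (Fin N) ℝ) (w : Fin N → ℝ) :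
    Matrix (Fin (N + N)) (Fin (N + N)) ℝ :=
  Matrix.reindex finSumFinEquiv finSumFinEquiv
    (Matrix.fromBlocks (L1 + Matrix.diagonal w) (-(Matrix.diagonal w))
      (-(Matrix.diagonal w)) (L2 + Matrix.diagonal w))

/-- The interlayer edge matrix `L_{i,i+N} = (δ_i - δ_{i+N})(δ_i - δ_{i+N})ᵀ`. -/
noncomputable def interE {N : ℕ} (i : Fin N) : Matrix (Fin (N + N)) (Fin (N + N)) ℝ :=
  Matrix.vecMulVec
    (Pi.single (Fin.castAdd N i) 1 - Pi.single (Fin.natAdd N i) 1)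
    (Pi.single (Fin.castAdd N i) 1 - Pi.single (Fin.natAdd N i) 1)

/-- The matrix inner product `⟨A, B⟩ = trace(AᵀB)`. -/
noncomputable def mip {m : ℕ} (A B : Matrix (Fin m) (Fin m) ℝ) : ℝ := (Aᵀ * B).trace

/-- The block-diagonal Laplacian `L0 = diag(L1, L2)` of the disjoint union of the layers. -/
noncomputable def L0big {N : ℕ} (L1 L2 : Matrix (Fin N) (Fin N) ℝ) :
    Matrix (Fin (N + N)) (Fin (N + N)) ℝ :=
  Matrix.reindex finSumFinEquiv finSumFinEquiv (Matrix.fromBlocks L1 0 0 L2)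

/-- The vector `z = (e; -e) ∈ ℝ^n`. -/
noncomputable def zvec (N : ℕ) : Fin (N + N) → ℝ :=
  fun k => if (k : ℕ) < N then 1 else -1

lemma mip_eq {m : ℕ} (A B : Matrix (Fin m) (Fin m) ℝ) :
    mip A B = ∑ j, ∑ i, A j i * B j i := by
  rw [mip]
  simp only [Matrix.trace, Matrix.diag, Matrix.mul_apply, Matrix.transpose_apply]
  rw [Finset.sum_comm]

lemma specKey {m : ℕ} (hm : 1 < m) (A : Matrix (Fin m) (Fin m) ℝ)
    (hPSD : A.PosSemidef)
    (v0 : Fin m → ℝ) (hv0 : v0 ≠ 0) (hAv0 : A *ᵥ v0 = 0)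
    (lam : ℝ) (hlam : lam = sortedEigs A ⟨1, hm⟩) (hlam0 : lam ≠ 0)
    (x : Fin m → ℝ) (hx : v0 ⬝ᵥ x = 0) :
    lam * (x ⬝ᵥ x) ≤ x ⬝ᵥ (A *ᵥ x) ∧
      (x ⬝ᵥ (A *ᵥ x) ≤ lam * (x ⬝ᵥ x) → A *ᵥ x = lam • x) := by
  have hA : A.IsHermitian := hPSD.1
  set V : Matrix (Fin m) (Fin m) ℝ := (hA.eigenvectorUnitary : Matrix (Fin m) (Fin m) ℝ) with hVdef
  set μ : Fin m → ℝ := hA.eigenvalues with hμdef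
  have hV2 : V * star V = 1 := Matrix.mem_unitaryGroup_iff.mp hA.eigenvectorUnitary.2
  have hV1 : star V * V = 1 := Matrix.mem_unitaryGroup_iff'.mp hA.eigenvectorUnitary.2
  have hspec : A = V * diagonal μ * star V := by
    have := hA.spectral_theorem
    rwa [RCLike.ofReal_real_eq_id, Function.id_comp] at this
  have hVT : star V = Vᵀ := by
    rw [Matrix.star_eq_conjTranspose]; simp
  have hVVT : V * Vᵀ = 1 := by rw [← hVT]; exact hV2
  -- the coefficient map
  set y : Fin m → ℝ := star V *ᵥ x with hydef
  set y0 : Fin m → ℝ := star V *ᵥ v0 with hy0def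
  have hrecover : ∀ a : Fin m → ℝ, V *ᵥ (star V *ᵥ a) = a := by
    intro a; rw [mulVec_mulVec, hV2, one_mulVec]
  have hdot : ∀ a b : Fin m → ℝ, (star V *ᵥ a) ⬝ᵥ (star V *ᵥ b) = a ⬝ᵥ b := by
    intro a b
    rw [hVT, mulVec_transpose, ← dotProduct_mulVec, mulVec_mulVec, hVVT, one_mulVec]
  have hAx : A *ᵥ x = V *ᵥ (diagonal μ *ᵥ y) := by
    rw [hspec, hydef, hVT, ← mulVec_mulVec, ← mulVec_mulVec]
  have hquad : x ⬝ᵥ (A *ᵥ x) = ∑ k, μ k * (y k)^2 := by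
    rw [hAx]
    have : x ⬝ᵥ (V *ᵥ (diagonal μ *ᵥ y)) = (Vᵀ *ᵥ x) ⬝ᵥ (diagonal μ *ᵥ y) := by
      rw [mulVec_transpose, ← dotProduct_mulVec]
    rw [this, ← hVT]
    show y ⬝ᵥ (diagonal μ *ᵥ y) = _
    simp only [dotProduct, mulVec_diagonal]
    exact Finset.sum_congr rfl fun k _ => by ring
  have hnorm : x ⬝ᵥ x = ∑ k, (y k)^2 := by
    rw [← hdot x x]
    simp only [← hydef, dotProduct]
    exact Finset.sum_congr rfl fun k _ => by ring
  have hDy0 : ∀ k, μ k * y0 k = 0 := by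
    have h1 : diagonal μ *ᵥ y0 = 0 := by
      have hV0 : V *ᵥ (diagonal μ *ᵥ y0) = 0 := by
        rw [hy0def, mulVec_mulVec, mulVec_mulVec, ← hspec, hAv0]
      have h2 := congrArg (fun z => star V *ᵥ z) hV0
      simp only [mulVec_mulVec, mulVec_zero] at h2
      rw [← mul_assoc, hV1, one_mul] at h2
      exact h2
    intro k
    have := congrFun h1 k
    rwa [mulVec_diagonal] at this
  have hy0ne : y0 ≠ 0 := by
    intro h
    apply hv0
    rw [← hrecover v0, ← hy0def, h, mulVec_zero]
  -- sorted eigenvalue structure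
  set σ : Equiv.Perm (Fin m) := Tuple.sort μ with hσdef
  have hk0lt : 0 < m := by omega
  set k0 : Fin m := ⟨0, hk0lt⟩ with hk0def
  have hmono : Monotone (μ ∘ σ) := Tuple.monotone_sort μ
  have hμnn : ∀ k, 0 ≤ μ k := hPSD.eigenvalues_nonneg
  have hlam' : lam = μ (σ ⟨1, hm⟩) := by
    rw [hlam, sortedEigs, dif_pos hA]
  have h0le : ∀ j, μ (σ k0) ≤ μ j := by
    intro j
    have := hmono (show k0 ≤ σ.symm j from Fin.le_def.mpr (Nat.zero_le _))
    simpa using this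
  have hμσ0 : μ (σ k0) = 0 := by
    obtain ⟨j, hj⟩ := Function.ne_iff.mp hy0ne
    have hj0 : μ j = 0 := by
      have := hDy0 j
      rcases mul_eq_zero.mp this with h | h
      · exact h
      · exact absurd h hj
    exact le_antisymm (hj0 ▸ h0le j) (hμnn _)
  have hlampos : 0 < lam := by
    have h1 : 0 ≤ lam := by
      rw [hlam']
      calc (0:ℝ) = μ (σ k0) := hμσ0.symm
      _ ≤ μ (σ ⟨1, hm⟩) := hmono (Fin.le_def.mpr (Nat.zero_le _))
    exact lt_of_le_of_ne h1 (Ne.symm hlam0)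
  have hge : ∀ k, k ≠ σ k0 → lam ≤ μ k := by
    intro k hk
    have h1 : σ.symm k ≠ k0 := by
      intro h; apply hk; rw [← h, Equiv.apply_symm_apply]
    have h2 : (⟨1, hm⟩ : Fin m) ≤ σ.symm k := by
      rw [Fin.le_def]
      exact Nat.one_le_iff_ne_zero.mpr (fun h => h1 (Fin.ext h))
    have := hmono h2
    simpa [hlam'] using this
  have hy0k : ∀ k, k ≠ σ k0 → y0 k = 0 := by
    intro k hk
    rcases mul_eq_zero.mp (hDy0 k) with h | h
    · exact absurd h (by linarith [hge k hk])
    · exact h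
  have hy0k0 : y0 (σ k0) ≠ 0 := by
    intro h
    apply hy0ne
    funext k
    by_cases hk : k = σ k0
    · rw [hk]; exact h
    · exact hy0k k hk
  have hyk0 : y (σ k0) = 0 := by
    have h1 : y0 ⬝ᵥ y = 0 := by rw [hy0def, hydef, hdot, hx]
    have h2 : y0 ⬝ᵥ y = y0 (σ k0) * y (σ k0) := by
      rw [dotProduct]
      exact Finset.sum_eq_single (σ k0) (fun k _ hk => by rw [hy0k k hk, zero_mul])
        (fun h => absurd (Finset.mem_univ _) h)
    rw [h2] at h1
    rcases mul_eq_zero.mp h1 with h | h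
    · exact absurd h hy0k0
    · exact h
  have hterm : ∀ k, 0 ≤ (μ k - lam) * (y k)^2 := by
    intro k
    by_cases hk : k = σ k0
    · rw [hk, hyk0]; simp
    · have := hge k hk
      have := sq_nonneg (y k)
      nlinarith
  have hdiff : x ⬝ᵥ (A *ᵥ x) - lam * (x ⬝ᵥ x) = ∑ k, (μ k - lam) * (y k)^2 := by
    rw [hquad, hnorm, Finset.mul_sum, ← Finset.sum_sub_distrib]
    exact Finset.sum_congr rfl fun k _ => by ring
  constructor
  · have : 0 ≤ ∑ k, (μ k - lam) * (y k)^2 := Finset.sum_nonneg fun k _ => hterm k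
    linarith [hdiff]
  · intro hle
    have hS : ∑ k, (μ k - lam) * (y k)^2 = 0 := by
      have h1 : ∑ k, (μ k - lam) * (y k)^2 ≤ 0 := by linarith [hdiff]
      have h2 : 0 ≤ ∑ k, (μ k - lam) * (y k)^2 := Finset.sum_nonneg fun k _ => hterm k
      linarith
    have hzero : ∀ k, (μ k - lam) * (y k)^2 = 0 :=
      fun k => (Finset.sum_eq_zero_iff_of_nonneg (fun k _ => hterm k)).mp hS k (Finset.mem_univ k)
    have hDy : diagonal μ *ᵥ y = lam • y := by
      funext k
      rw [mulVec_diagonal, Pi.smul_apply, smul_eq_mul]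
      rcases mul_eq_zero.mp (hzero k) with h | h
      · have : μ k = lam := by linarith
        rw [this]
      · have : y k = 0 := by
          exact pow_eq_zero_iff (two_ne_zero) |>.mp h
        rw [this, mul_zero, mul_zero]
    rw [hAx, hDy, mulVec_smul, hrecover]


/-- Clumped one-dimensional optimal embedding below the threshold: if `λ₂(L(w))` is simple
with Fiedler vector `z = (e; -e)`, and `X = UᵀU` satisfies the complementary-slackness
conditions, then there is `h ∈ ℝ^n` such that the columns of `U` equal `h` on the first
layer and `-h` on the second layer. -/
theorem stmt8 (N : ℕ) (hN : 1 ≤ N)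
    (L1 L2 : Matrix (Fin N) (Fin N) ℝ)
    (hL1 : L1.PosSemidef) (hL2 : L2.PosSemidef)
    (hL1e : L1 *ᵥ (fun _ => (1 : ℝ)) = 0) (hL2e : L2 *ᵥ (fun _ => (1 : ℝ)) = 0)
    (w : Fin N → ℝ) (hw : ∀ i, 0 ≤ w i)
    (lam : ℝ) (hlam : lam = sortedEigs (supraLap L1 L2 w) ⟨1, by omega⟩)
    (hz : (supraLap L1 L2 w) *ᵥ zvec N = lam • zvec N)
    (hsimple : ∀ x : Fin (N + N) → ℝ,
      (supraLap L1 L2 w) *ᵥ x = lam • x → ∃ t : ℝ, x = t • zvec N)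
    (U : Matrix (Fin (N + N)) (Fin (N + N)) ℝ)
    (hXe : mip (Uᵀ * U) (Matrix.vecMulVec (fun _ => (1 : ℝ)) (fun _ => (1 : ℝ))) = 0)
    (hXs : mip (Uᵀ * U)
      (supraLap L1 L2 w - lam • (1 : Matrix (Fin (N + N)) (Fin (N + N)) ℝ)) = 0) :
    ∃ h : Fin (N + N) → ℝ, ∀ i : Fin N,
      (fun k => U k (Fin.castAdd N i)) = h ∧ (fun k => U k (Fin.natAdd N i)) = -h := by
  have hm : 1 < N + N := by omega
  set A := supraLap L1 L2 w with hAdef2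
  set e : Fin N ⊕ Fin N ≃ Fin (N + N) := finSumFinEquiv with hedef
  set B : Matrix (Fin N ⊕ Fin N) (Fin N ⊕ Fin N) ℝ :=
    fromBlocks (L1 + diagonal w) (-(diagonal w)) (-(diagonal w)) (L2 + diagonal w) with hBdef
  have hAB : A = B.submatrix ⇑e.symm ⇑e.symm := by
    rw [hAdef2, supraLap, reindex_apply]
  have hdiagdot : ∀ u v : Fin N → ℝ, u ⬝ᵥ (diagonal w *ᵥ v) = ∑ i, w i * (u i * v i) := by
    intro u v
    simp only [dotProduct, mulVec_diagonal]
    exact Finset.sum_congr rfl fun i _ => by ring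
  have hBPSD : B.PosSemidef := by
    rw [posSemidef_iff_dotProduct_mulVec]
    constructor
    · rw [hBdef, isHermitian_fromBlocks_iff]
      exact ⟨hL1.1.add (isHermitian_diagonal w), (isHermitian_diagonal w).neg,
        (isHermitian_diagonal w).neg, hL2.1.add (isHermitian_diagonal w)⟩
    · intro x
      have hxe : x = Sum.elim (x ∘ Sum.inl) (x ∘ Sum.inr) := (Sum.elim_comp_inl_inr x).symm
      set x1 : Fin N → ℝ := x ∘ Sum.inl with hx1
      set x2 : Fin N → ℝ := x ∘ Sum.inr with hx2
      rw [hxe, hBdef, fromBlocks_mulVec]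
      simp only [Sum.elim_comp_inl, Sum.elim_comp_inr, star_trivial,
        sumElim_dotProduct_sumElim, add_mulVec, neg_mulVec, dotProduct_add, dotProduct_neg]
      have key : x1 ⬝ᵥ (diagonal w *ᵥ x1) - x1 ⬝ᵥ (diagonal w *ᵥ x2)
          - x2 ⬝ᵥ (diagonal w *ᵥ x1) + x2 ⬝ᵥ (diagonal w *ᵥ x2)
          = ∑ i, w i * (x1 i - x2 i)^2 := by
        rw [hdiagdot, hdiagdot, hdiagdot, hdiagdot, ← Finset.sum_sub_distrib,
          ← Finset.sum_sub_distrib, ← Finset.sum_add_distrib]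
        exact Finset.sum_congr rfl fun i _ => by ring
      have h1 : 0 ≤ x1 ⬝ᵥ (L1 *ᵥ x1) := by simpa using hL1.dotProduct_mulVec_nonneg x1
      have h2 : 0 ≤ x2 ⬝ᵥ (L2 *ᵥ x2) := by simpa using hL2.dotProduct_mulVec_nonneg x2
      have h3 : 0 ≤ ∑ i, w i * (x1 i - x2 i)^2 :=
        Finset.sum_nonneg fun i _ => mul_nonneg (hw i) (sq_nonneg _)
      linarith [key]
  have hAPSD : A.PosSemidef := by rw [hAB]; exact hBPSD.submatrix _
  have hAe : A *ᵥ (fun _ => (1:ℝ)) = 0 := by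
    rw [hAB, submatrix_mulVec_equiv]
    have h1 : ((fun _ => (1:ℝ)) ∘ ⇑e.symm.symm) = Sum.elim (fun _ => (1:ℝ)) (fun _ => (1:ℝ)) := by
      funext s; cases s <;> rfl
    have h2 : B *ᵥ Sum.elim (fun _ => (1:ℝ)) (fun _ => (1:ℝ)) = 0 := by
      rw [hBdef, fromBlocks_mulVec]
      simp only [Sum.elim_comp_inl, Sum.elim_comp_inr, add_mulVec, neg_mulVec, hL1e, hL2e]
      funext s; cases s <;> simp
    rw [h1, h2]
    funext k; simp
  have honesne : (fun _ => (1:ℝ)) ≠ (0 : Fin (N+N) → ℝ) := by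
    intro h
    have := congrFun h ⟨0, by omega⟩
    norm_num at this
  have hzvc : ∀ i : Fin N, zvec N (Fin.castAdd N i) = 1 := by
    intro i
    have hv : ((Fin.castAdd N i : Fin (N+N)) : ℕ) = (i : ℕ) := rfl
    simp only [zvec, hv, if_pos i.isLt]
  have hzvn : ∀ i : Fin N, zvec N (Fin.natAdd N i) = -1 := by
    intro i
    have hv : ((Fin.natAdd N i : Fin (N+N)) : ℕ) = N + (i : ℕ) := rfl
    simp only [zvec, hv]
    rw [if_neg (by omega)]
  have hlamne : lam ≠ 0 := by
    intro h0
    obtain ⟨t, ht⟩ := hsimple (fun _ => 1) (by rw [hAe, h0, zero_smul])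
    have h1 := congrFun ht (Fin.castAdd N ⟨0, hN⟩)
    have h2 := congrFun ht (Fin.natAdd N ⟨0, hN⟩)
    simp only [Pi.smul_apply, smul_eq_mul, hzvc, hzvn] at h1 h2
    nlinarith
  have reorder : ∀ (M : Matrix (Fin (N+N)) (Fin (N+N)) ℝ),
      ∑ j, ∑ i, (Uᵀ * U) j i * M j i = ∑ k, ((fun j => U k j) ⬝ᵥ (M *ᵥ (fun j => U k j))) := by
    intro M
    calc ∑ j, ∑ i, (Uᵀ * U) j i * M j i
        = ∑ j, ∑ i, ∑ k, U k j * U k i * M j i := by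
          refine Finset.sum_congr rfl fun j _ => Finset.sum_congr rfl fun i _ => ?_
          rw [Matrix.mul_apply, Finset.sum_mul]
          exact Finset.sum_congr rfl fun k _ => by rw [Matrix.transpose_apply]
    _ = ∑ j, ∑ k, ∑ i, U k j * U k i * M j i :=
          Finset.sum_congr rfl fun j _ => Finset.sum_comm
    _ = ∑ k, ∑ j, ∑ i, U k j * U k i * M j i := Finset.sum_comm
    _ = ∑ k, ((fun j => U k j) ⬝ᵥ (M *ᵥ (fun j => U k j))) := by
          refine Finset.sum_congr rfl fun k _ => ?_
          simp only [dotProduct, mulVec, Finset.mul_sum]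
          exact Finset.sum_congr rfl fun j _ => Finset.sum_congr rfl fun i _ => by ring
  have hrowsum : ∀ k, ∑ j, U k j = 0 := by
    rw [mip_eq, reorder] at hXe
    have hterm : ∀ k, ((fun j => U k j) ⬝ᵥ
        ((vecMulVec (fun _ => (1:ℝ)) (fun _ => (1:ℝ))) *ᵥ (fun j => U k j))) = (∑ j, U k j)^2 := by
      intro k
      simp only [dotProduct, mulVec, vecMulVec_apply, one_mul]
      rw [← Finset.sum_mul, sq]
    simp only [hterm] at hXe
    intro k
    have h1 : ∀ k ∈ Finset.univ, (0:ℝ) ≤ (∑ j, U k j)^2 := fun k _ => sq_nonneg _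
    have := (Finset.sum_eq_zero_iff_of_nonneg h1).mp hXe k (Finset.mem_univ k)
    exact pow_eq_zero_iff two_ne_zero |>.mp this
  have hrowsE : ∀ k, (fun _ => (1:ℝ)) ⬝ᵥ (fun j => U k j) = 0 := by
    intro k
    simpa [dotProduct] using hrowsum k
  rw [mip_eq, reorder] at hXs
  have hMrow : ∀ k, (fun j => U k j) ⬝ᵥ ((A - lam • 1) *ᵥ (fun j => U k j))
      = (fun j => U k j) ⬝ᵥ (A *ᵥ (fun j => U k j))
        - lam * ((fun j => U k j) ⬝ᵥ (fun j => U k j)) := by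
    intro k
    rw [sub_mulVec, smul_mulVec, one_mulVec, dotProduct_sub, dotProduct_smul, smul_eq_mul]
  have hspec1 := fun k => specKey hm A hAPSD (fun _ => 1) honesne hAe lam hlam hlamne
    (fun j => U k j) (hrowsE k)
  have hnonneg : ∀ k ∈ Finset.univ,
      (0:ℝ) ≤ (fun j => U k j) ⬝ᵥ ((A - lam • 1) *ᵥ (fun j => U k j)) := by
    intro k _
    rw [hMrow k]
    linarith [(hspec1 k).1]
  have hzero : ∀ k, (fun j => U k j) ⬝ᵥ ((A - lam • 1) *ᵥ (fun j => U k j)) = 0 :=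
    fun k => (Finset.sum_eq_zero_iff_of_nonneg hnonneg).mp hXs k (Finset.mem_univ k)
  have heig : ∀ k, A *ᵥ (fun j => U k j) = lam • (fun j => U k j) := by
    intro k
    apply (hspec1 k).2
    have h := hzero k
    rw [hMrow k] at h
    linarith
  have hT : ∀ k, ∃ t : ℝ, (fun j => U k j) = t • zvec N := fun k => hsimple _ (heig k)
  choose t ht using hT
  refine ⟨t, fun i => ⟨?_, ?_⟩⟩
  · funext k
    have h := congrFun (ht k) (Fin.castAdd N i)
    simp only [Pi.smul_apply, smul_eq_mul, hzvc, mul_one] at h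
    exact h
  · funext k
    have h := congrFun (ht k) (Fin.natAdd N i)
    simp only [Pi.smul_apply, smul_eq_mul, hzvn] at h
    rw [Pi.neg_apply, h]
    ring
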